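/- Under the Markovian grand coupling of IDLA(K,ν) processes, set h(A) := E[T^A], where T^A is the filling time started from A ⊆ V. Then for any x ∈ V and any A ⊆ V, 0 ≤ h(A) − h(A∪{x}) ≤ 1/min_{z∈V} p(z), where p(z) := P_ν(τ_z < τ_†) is the probability that a (K,ν)-walk hits z before dying. -/

import Mathlib

open scoped ENNReal BigOperators
open Filter Asymptotics

namespace ARW

variable {V : Type} [Fintype V] [DecidableEq V]

/-- A sub-stochastic matrix: every row sums to at most `1`. -/
def SubStochastic (K : V → V → ℝ≥0∞) : Prop := ∀ x, ∑ y, K x y ≤ 1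

/-- Non-degenerate: no principal sub-matrix of `K` is stochastic. -/
def NonDegenerate (K : V → V → ℝ≥0∞) : Prop :=
  ∀ S : Finset V, S.Nonempty → ∃ x ∈ S, ∑ y ∈ S, K x y ≠ 1

/-- A probability vector on `V`. -/
def IsProbVec (ν : V → ℝ≥0∞) : Prop := ∑ x, ν x = 1

/-- Probability that the `K`-walk currently at `x` next follows the trajectory `xs`
and is then killed. -/
noncomputable def pathProb (K : V → V → ℝ≥0∞) : V → List V → ℝ≥0∞
  | x, [] => 1 - ∑ y, K x y
  | x, y :: ys => K x y * pathProb K y ys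

/-- Probability that a `(K,ν)`-walk has the (finite) full trajectory `w`. -/
noncomputable def walkProb (K : V → V → ℝ≥0∞) (ν : V → ℝ≥0∞) : List V → ℝ≥0∞
  | [] => 0
  | x :: xs => ν x * pathProb K x xs

/-- `p(x)`: the probability that a `(K,ν)`-walk visits `x` before dying. -/
noncomputable def hitProb (K : V → V → ℝ≥0∞) (ν : V → ℝ≥0∞) (x : V) : ℝ≥0∞ :=
  ∑' w : List V, if x ∈ w then walkProb K ν w else 0

/-- The insertion law `ν` is admissible when every site has a chance of being
visited by a `(K,ν)`-walk. -/
def Admissible (K : V → V → ℝ≥0∞) (ν : V → ℝ≥0∞) : Prop := ∀ x, 0 < hitProb K ν x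

/-- The uniform law on `V`. -/
noncomputable def unifLaw (V : Type) [Fintype V] : V → ℝ≥0∞ :=
  fun _ => (Fintype.card V : ℝ≥0∞)⁻¹

/-! ### IDLA -/

/-- The IDLA update: the walker settles at the first site of its trajectory
which is not already occupied. -/
def idlaUpdate (S : Finset V) : List V → Finset V
  | [] => S
  | x :: xs => if x ∈ S then idlaUpdate S xs else insert x S

/-- The IDLA aggregate obtained from the initial set `A` after using the walks `ws`. -/
def idlaSet (A : Finset V) (ws : List (List V)) : Finset V := ws.foldl idlaUpdate A

/-- `P(T^A > t)`: probability that the IDLA process started from `A` and driven by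
i.i.d. `(K,ν)`-walks has not filled `V` after `t` steps. -/
noncomputable def idlaTail (K : V → V → ℝ≥0∞) (ν : V → ℝ≥0∞) (A : Finset V) (t : ℕ) : ℝ≥0∞ :=
  ∑' ws : Fin t → List V,
    (∏ i, walkProb K ν (ws i)) * (if idlaSet A (List.ofFn ws) = Finset.univ then 0 else 1)

/-- `E[T^A]`: the expected filling time of IDLA started from `A`. -/
noncomputable def idlaMean (K : V → V → ℝ≥0∞) (ν : V → ℝ≥0∞) (A : Finset V) : ℝ≥0∞ :=
  ∑' t : ℕ, idlaTail K ν A t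

/-- `Var(T^A)`: the variance of the filling time of IDLA started from `A`. -/
noncomputable def idlaVar (K : V → V → ℝ≥0∞) (ν : V → ℝ≥0∞) (A : Finset V) : ℝ≥0∞ :=
  (∑' t : ℕ, (2 * t + 1) * idlaTail K ν A t) - (idlaMean K ν A) ^ 2

/-! ### The ARW chain -/

/-- The state of a single site: empty, one sleeping particle, or `n+1` active particles. -/
inductive Site : Type
  | empty : Site
  | sleeping : Site
  | active (n : ℕ) : Site
deriving DecidableEq

/-- A configuration of particles. -/
abbrev Conf (V : Type) := V → Site

def Site.isActive : Site → Bool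
  | .active _ => true
  | _ => false

/-- The set of sites holding at least one active particle. -/
def activeSites (η : Conf V) : Finset V := Finset.univ.filter fun x => (η x).isActive

/-- Adding one active particle to a site (waking a sleeping particle if present). -/
def Site.addActive : Site → Site
  | .empty => .active 0
  | .sleeping => .active 1
  | .active n => .active (n + 1)

/-- Removing one active particle from a site. -/
def Site.removeOne : Site → Site
  | .active (n + 1) => .active n
  | _ => .empty

/-- Adding one active particle at site `y`. -/
def addActiveAt (η : Conf V) (y : V) : Conf V := Function.update η y (η y).addActive

/-- One sequential toppling step of ARW stabilization with sleep rate `lam`: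
an active site `x` is selected (if any); if its particle is alone it falls asleep
with probability `lam/(1+lam)`, moves to `y` with probability `K x y/(1+lam)` and
dies with the remaining probability; if it is not alone it moves to `y` with
probability `K x y` and dies with the remaining probability.  Stable
configurations are absorbing. -/
noncomputable def toppleKernel (K : V → V → ℝ≥0∞) (lam : ℝ) (η ξ : Conf V) : ℝ≥0∞ :=
  if h : (activeSites η).Nonempty then
    let x := h.choose
    let ημ : Conf V := Function.update η x (η x).removeOne
    let move : ℝ≥0∞ := ∑ y, if ξ = addActiveAt ημ y then K x y else 0
    let die : ℝ≥0∞ := if ξ = ημ then 1 - ∑ y, K x y else 0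
    if η x = Site.active 0 then
      ((if ξ = Function.update η x Site.sleeping then ENNReal.ofReal lam else 0) + move + die)
        / (ENNReal.ofReal lam + 1)
    else move + die
  else if ξ = η then 1 else 0

/-- Iterates of a sub-probability kernel on configurations. -/
noncomputable def kernelPow (M : Conf V → Conf V → ℝ≥0∞) : ℕ → Conf V → Conf V → ℝ≥0∞
  | 0 => fun η ξ => if ξ = η then 1 else 0
  | t + 1 => fun η ξ => ∑' σ : Conf V, M η σ * kernelPow M t σ ξ

/-- A stable configuration, seen as a configuration (`true` = sleeping particle). -/
def embed (b : V → Bool) : Conf V := fun x => if b x then Site.sleeping else Site.empty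

/-- One step of the `ARW(K,lam,ν)` chain: insert an active particle at a `ν`-distributed
site and stabilize; `arwStep K lam ν η ξ` is the probability of reaching the stable
configuration `ξ` from the stable configuration `η`. -/
noncomputable def arwStep (K : V → V → ℝ≥0∞) (lam : ℝ) (ν : V → ℝ≥0∞)
    (η ξ : V → Bool) : ℝ≥0∞ :=
  ∑ x, ν x * ⨆ t, kernelPow (toppleKernel K lam) t (addActiveAt (embed η) x) (embed ξ)

/-- The transition matrix of the `ARW(K,lam,ν)` chain on stable configurations. -/
noncomputable def arwMatrix (K : V → V → ℝ≥0∞) (lam : ℝ) (ν : V → ℝ≥0∞) :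
    Matrix (V → Bool) (V → Bool) ℝ :=
  Matrix.of fun η ξ => (arwStep K lam ν η ξ).toReal

/-! ### Distances to equilibrium, mixing and relaxation times -/

variable {S : Type} [Fintype S] [DecidableEq S]

/-- `π` is a stationary probability distribution for `P`. -/
def IsStationary (P : Matrix S S ℝ) (π : S → ℝ) : Prop :=
  (∀ s, 0 ≤ π s) ∧ (∑ s, π s = 1) ∧ ∀ s, ∑ r, π r * P r s = π s

/-- The separation distance to equilibrium at time `t`. -/
noncomputable def sepDist (P : Matrix S S ℝ) (π : S → ℝ) (t : ℕ) : ℝ :=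
  ⨆ η, ⨆ ξ, (1 - (P ^ t) η ξ / π ξ)

/-- The separation mixing time with precision `ε`. -/
noncomputable def sepMix (P : Matrix S S ℝ) (π : S → ℝ) (ε : ℝ) : ℕ :=
  sInf {t : ℕ | sepDist P π t ≤ ε}

/-- The total-variation distance to equilibrium at time `t`. -/
noncomputable def tvDist (P : Matrix S S ℝ) (π : S → ℝ) (t : ℕ) : ℝ :=
  ⨆ η, ⨆ A : Finset S, |∑ ξ ∈ A, ((P ^ t) η ξ - π ξ)|

/-- The total-variation mixing time with precision `ε`. -/
noncomputable def tvMix (P : Matrix S S ℝ) (π : S → ℝ) (ε : ℝ) : ℕ :=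
  sInf {t : ℕ | tvDist P π t ≤ ε}

/-- The relaxation time `1/(1-ρ)`, where `ρ` is the largest modulus of the
(complex) eigenvalues of `P` other than `1`. -/
noncomputable def relTime (P : Matrix S S ℝ) : ℝ :=
  (1 - sSup {r : ℝ | ∃ z : ℂ,
      z ≠ 1 ∧ (P.map (fun a : ℝ => (a : ℂ))).charpoly.IsRoot z ∧ r = ‖z‖})⁻¹

/-- Separation (or total-variation) cutoff for a sequence of chains with distance
functions `d n` and mixing times `ts n`. -/
def HasCutoff (d : ℕ → ℕ → ℝ) (ts : ℕ → ℕ) : Prop :=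
  ∀ α : ℝ, 0 ≤ α →
    (α < 1 → Tendsto (fun n => d n ⌊α * (ts n : ℝ)⌋₊) atTop (nhds 1)) ∧
    (1 < α → Tendsto (fun n => d n ⌊α * (ts n : ℝ)⌋₊) atTop (nhds 0))

end ARW

namespace ARW

section Aux

variable {V : Type} [Fintype V] [DecidableEq V]

lemma subset_idlaUpdate (S : Finset V) (w : List V) : S ⊆ idlaUpdate S w := by
  induction w generalizing S with
  | nil => exact subset_rfl
  | cons a w ih =>
    simp only [idlaUpdate]
    split
    · exact ih S
    · exact Finset.subset_insert _ _

lemma idlaUpdate_eq_or_insert (S : Finset V) (w : List V) :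
    idlaUpdate S w = S ∨ ∃ c, idlaUpdate S w = insert c S := by
  induction w generalizing S with
  | nil => exact Or.inl rfl
  | cons a w ih =>
    simp only [idlaUpdate]
    split
    · exact ih S
    · exact Or.inr ⟨a, rfl⟩

lemma idlaUpdate_eq_self {S : Finset V} {w : List V} (h : ∀ a ∈ w, a ∈ S) :
    idlaUpdate S w = S := by
  induction w with
  | nil => rfl
  | cons a w ih =>
    simp only [idlaUpdate, if_pos (h a List.mem_cons_self)]
    exact ih fun b hb => h b (List.mem_cons_of_mem _ hb)

lemma idlaUpdate_eq_insert {S : Finset V} {y : V} (hy : y ∉ S) (hS : ∀ z, z ≠ y → z ∈ S)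
    {w : List V} (hw : y ∈ w) : idlaUpdate S w = insert y S := by
  induction w with
  | nil => exact absurd hw List.not_mem_nil
  | cons a w ih =>
    simp only [idlaUpdate]
    by_cases haS : a ∈ S
    · rw [if_pos haS]
      have hay : a ≠ y := fun h => hy (h ▸ haS)
      rcases List.mem_cons.mp hw with h | h
      · exact absurd h.symm hay
      · exact ih h
    · rw [if_neg haS]
      have : a = y := by
        by_contra hne
        exact haS (hS a hne)
      rw [this]

lemma idlaUpdate_couple (w : List V) {A B : Finset V} (y : V) (hAB : A ⊆ B)
    (hBA : B ⊆ insert y A) :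
    idlaUpdate A w ⊆ idlaUpdate B w ∧ ∃ y', idlaUpdate B w ⊆ insert y' (idlaUpdate A w) := by
  induction w generalizing A B y with
  | nil => exact ⟨hAB, y, hBA⟩
  | cons a w ih =>
    simp only [idlaUpdate]
    by_cases haA : a ∈ A
    · rw [if_pos haA, if_pos (hAB haA)]
      exact ih y hAB hBA
    · rw [if_neg haA]
      by_cases haB : a ∈ B
      · rw [if_pos haB]
        have hay : a = y := by
          rcases Finset.mem_insert.mp (hBA haB) with h | h
          · exact h
          · exact absurd h haA
        have hBeq : B = insert a A :=
          le_antisymm (by rw [hay]; exact hBA) (Finset.insert_subset haB hAB)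
        refine ⟨?_, ?_⟩
        · rw [← hBeq]; exact subset_idlaUpdate B w
        · rcases idlaUpdate_eq_or_insert B w with h | ⟨c, h⟩
          · exact ⟨a, by rw [h, hBeq]; exact Finset.subset_insert _ _⟩
          · exact ⟨c, by rw [h, hBeq]⟩
      · rw [if_neg haB]
        refine ⟨Finset.insert_subset_insert a hAB, y, ?_⟩
        intro z hz
        rcases Finset.mem_insert.mp hz with rfl | hzB
        · exact Finset.mem_insert_of_mem (Finset.mem_insert_self _ _)
        · rcases Finset.mem_insert.mp (hBA hzB) with rfl | h
          · exact Finset.mem_insert_self _ _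
          · exact Finset.mem_insert_of_mem (Finset.mem_insert_of_mem h)

lemma idlaSet_cons (A : Finset V) (w : List V) (ws : List (List V)) :
    idlaSet A (w :: ws) = idlaSet (idlaUpdate A w) ws := rfl

lemma idlaSet_couple (ws : List (List V)) {A B : Finset V} (y : V) (hAB : A ⊆ B)
    (hBA : B ⊆ insert y A) :
    idlaSet A ws ⊆ idlaSet B ws ∧ ∃ y', idlaSet B ws ⊆ insert y' (idlaSet A ws) := by
  induction ws generalizing A B y with
  | nil => exact ⟨hAB, y, hBA⟩
  | cons w ws ih =>
    rw [idlaSet_cons, idlaSet_cons]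
    obtain ⟨h1, y', h2⟩ := idlaUpdate_couple w y hAB hBA
    exact ih y' h1 h2

/-! ### Finite sets of lists of bounded length -/

def listsLe (V : Type) [Fintype V] [DecidableEq V] : ℕ → Finset (List V)
  | 0 => {[]}
  | n + 1 => insert [] ((Finset.univ ×ˢ listsLe V n).image fun p => p.1 :: p.2)

lemma mem_listsLe : ∀ {n : ℕ} {w : List V}, w.length ≤ n → w ∈ listsLe V n
  | 0, w, h => by
      have hw := List.length_eq_zero_iff.mp (Nat.le_zero.mp h)
      subst hw
      simp [listsLe]
  | n + 1, [], _ => Finset.mem_insert_self _ _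
  | n + 1, a :: t, h => by
      refine Finset.mem_insert_of_mem (Finset.mem_image.mpr ⟨(a, t), ?_, rfl⟩)
      refine Finset.mem_product.mpr ⟨Finset.mem_univ _, mem_listsLe ?_⟩
      simpa using Nat.succ_le_succ_iff.mp h

variable (K : V → V → ℝ≥0∞) (ν : V → ℝ≥0∞)

lemma pathProb_sum_le (hsub : SubStochastic K) :
    ∀ (n : ℕ) (x : V), ∑ w ∈ listsLe V n, pathProb K x w ≤ 1
  | 0, x => by
      simp only [listsLe, Finset.sum_singleton, pathProb]
      exact tsub_le_self
  | n + 1, x => by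
      rw [listsLe, Finset.sum_insert (by simp)]
      rw [Finset.sum_image (by rintro ⟨a, s⟩ _ ⟨b, t⟩ _ h; simpa using h)]
      rw [Finset.sum_product]
      simp only [pathProb]
      calc (1 - ∑ y, K x y) + ∑ y, ∑ t ∈ listsLe V n, K x y * pathProb K y t
          = (1 - ∑ y, K x y) + ∑ y, K x y * ∑ t ∈ listsLe V n, pathProb K y t := by
            simp [Finset.mul_sum]
        _ ≤ (1 - ∑ y, K x y) + ∑ y, K x y * 1 := by
            gcongr with y
            exact pathProb_sum_le hsub n y
        _ = 1 := by
            simp only [mul_one]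
            exact tsub_add_cancel_of_le (hsub x)

lemma walkProb_tsum_le_one (hsub : SubStochastic K) (hν : IsProbVec ν) :
    ∑' w : List V, walkProb K ν w ≤ 1 := by
  rw [ENNReal.tsum_eq_iSup_sum]
  refine iSup_le fun s => ?_
  set n := s.sup List.length with hn
  have hsub' : s ⊆ listsLe V (n + 1) := fun w hw =>
    mem_listsLe (le_trans (Finset.le_sup (f := List.length) hw) (Nat.le_succ n))
  refine le_trans (Finset.sum_le_sum_of_subset hsub') ?_
  rw [listsLe, Finset.sum_insert (by simp)]
  rw [Finset.sum_image (by rintro ⟨a, u⟩ _ ⟨b, t⟩ _ h; simpa using h)]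
  rw [Finset.sum_product]
  simp only [walkProb]
  calc (0 : ℝ≥0∞) + ∑ x, ∑ t ∈ listsLe V n, ν x * pathProb K x t
      = ∑ x, ν x * ∑ t ∈ listsLe V n, pathProb K x t := by
        simp [Finset.mul_sum]
    _ ≤ ∑ x, ν x * 1 := by
        gcongr with x
        exact pathProb_sum_le K hsub n x
    _ = 1 := by simp only [mul_one]; exact hν

lemma hitProb_le (hsub : SubStochastic K) (hν : IsProbVec ν) (z : V) :
    hitProb K ν z ≤ 1 := by
  refine le_trans ?_ (walkProb_tsum_le_one K ν hsub hν)
  refine ENNReal.tsum_le_tsum fun w => ?_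
  split <;> simp

lemma miss_tsum_le (hsub : SubStochastic K) (hν : IsProbVec ν) (y : V) :
    ∑' w : List V, (if y ∈ w then 0 else walkProb K ν w)
      ≤ 1 - ⨅ z, hitProb K ν z := by
  have hfin : (⨅ z, hitProb K ν z) ≠ ∞ :=
    (lt_of_le_of_lt (iInf_le _ y) (lt_of_le_of_lt (hitProb_le K ν hsub hν y) ENNReal.one_lt_top)).ne
  refine ENNReal.le_sub_of_add_le_right hfin ?_
  calc (∑' w : List V, (if y ∈ w then 0 else walkProb K ν w)) + ⨅ z, hitProb K ν z
      ≤ (∑' w : List V, (if y ∈ w then 0 else walkProb K ν w)) + hitProb K ν y :=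
        add_le_add le_rfl (iInf_le _ y)
    _ = ∑' w : List V, walkProb K ν w := by
        rw [hitProb, ← ENNReal.tsum_add]
        refine tsum_congr fun w => ?_
        split <;> simp
    _ ≤ 1 := walkProb_tsum_le_one K ν hsub hν

/-! ### The coupled difference tail -/

noncomputable def pairTail (A B : Finset V) (t : ℕ) : ℝ≥0∞ :=
  ∑' ws : Fin t → List V,
    (∏ i, walkProb K ν (ws i)) *
      (if idlaSet B (List.ofFn ws) = Finset.univ ∧ idlaSet A (List.ofFn ws) ≠ Finset.univ
        then 1 else 0)

lemma pairTail_zero (A B : Finset V) :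
    pairTail K ν A B 0 = if B = Finset.univ ∧ A ≠ Finset.univ then 1 else 0 := by
  rw [pairTail, tsum_eq_single (default : Fin 0 → List V)
    (fun b hb => absurd (Subsingleton.elim b default) hb)]
  simp [idlaSet]

lemma pairTail_self (A : Finset V) (t : ℕ) : pairTail K ν A A t = 0 := by
  rw [pairTail]
  refine ENNReal.tsum_eq_zero.mpr fun ws => ?_
  rw [if_neg (by tauto), mul_zero]

lemma pairTail_succ (A B : Finset V) (t : ℕ) :
    pairTail K ν A B (t + 1) =
      ∑' w : List V, walkProb K ν w *
        pairTail K ν (idlaUpdate A w) (idlaUpdate B w) t := by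
  rw [pairTail, ← (Fin.consEquiv (fun _ : Fin (t + 1) => List V)).tsum_eq, ENNReal.tsum_prod']
  refine tsum_congr fun w => ?_
  rw [pairTail, ← ENNReal.tsum_mul_left]
  refine tsum_congr fun u => ?_
  have hcons : List.ofFn (Fin.cons w u : Fin (t + 1) → List V) = w :: List.ofFn u := by
    rw [List.ofFn_succ]
    simp
  have he : ((Fin.consEquiv fun _ : Fin (t + 1) => List V) (w, u)) = Fin.cons w u := rfl
  rw [he, hcons, idlaSet_cons, idlaSet_cons, Fin.prod_univ_succ]
  simp [Fin.cons_zero, Fin.cons_succ, mul_assoc]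

lemma idlaTail_split {A B : Finset V} (y : V) (hAB : A ⊆ B) (hBA : B ⊆ insert y A) (t : ℕ) :
    idlaTail K ν A t = idlaTail K ν B t + pairTail K ν A B t := by
  rw [idlaTail, idlaTail, pairTail, ← ENNReal.tsum_add]
  refine tsum_congr fun ws => ?_
  obtain ⟨hsub, -⟩ := idlaSet_couple (List.ofFn ws) y hAB hBA
  by_cases hB : idlaSet B (List.ofFn ws) = Finset.univ
  · by_cases hA : idlaSet A (List.ofFn ws) = Finset.univ
    · rw [if_pos hA, if_pos hB, if_neg (by tauto)]
      ring
    · rw [if_neg hA, if_pos hB, if_pos ⟨hB, hA⟩]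
      ring
  · have hA : idlaSet A (List.ofFn ws) ≠ Finset.univ := fun h =>
      hB (Finset.univ_subset_iff.mp (h ▸ hsub))
    rw [if_neg hA, if_neg hB, if_neg (by tauto)]
    ring

lemma pairTail_sum_le (hsub : SubStochastic K) (hν : IsProbVec ν)
    (hp0 : (⨅ z, hitProb K ν z) ≠ 0) (hp1 : (⨅ z, hitProb K ν z) ≤ 1) :
    ∀ (N : ℕ) (A B : Finset V), A ⊆ B → (∃ y, B ⊆ insert y A) →
      ∑ t ∈ Finset.range (N + 1), pairTail K ν A B t ≤ (⨅ z, hitProb K ν z)⁻¹ := by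
  set p := ⨅ z, hitProb K ν z with hp
  have hpinv1 : (1 : ℝ≥0∞) ≤ p⁻¹ := ENNReal.one_le_inv.mpr hp1
  intro N
  induction N with
  | zero =>
    intro A B hAB hBA
    rw [Finset.sum_range_one, pairTail_zero]
    split
    · exact hpinv1
    · exact zero_le
  | succ N ih =>
    intro A B hAB hBA
    by_cases hABeq : A = B
    · subst hABeq
      simp [pairTail_self]
    obtain ⟨y, hBA⟩ := hBA
    rw [Finset.sum_range_succ']
    by_cases hB : B = Finset.univ
    · subst hB
      have hAne : A ≠ Finset.univ := fun h => hABeq h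
      have hS : ∀ z, z ≠ y → z ∈ A := fun z hz => by
        rcases Finset.mem_insert.mp (hBA (Finset.mem_univ z)) with h | h
        · exact absurd h hz
        · exact h
      have hyA : y ∉ A := fun hyA =>
        hAne (Finset.eq_univ_of_forall fun z => by
          rcases eq_or_ne z y with rfl | hz
          · exact hyA
          · exact hS z hz)
      have hins : insert y A = Finset.univ :=
        Finset.eq_univ_of_forall fun z => by
          rcases eq_or_ne z y with rfl | hz
          · exact Finset.mem_insert_self _ _
          · exact Finset.mem_insert_of_mem (hS z hz)
      have h0 : pairTail K ν A Finset.univ 0 = 1 := by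
        rw [pairTail_zero, if_pos ⟨rfl, hAne⟩]
      rw [h0]
      have hrec : ∀ t, pairTail K ν A Finset.univ (t + 1) =
          ∑' w : List V, walkProb K ν w * pairTail K ν (idlaUpdate A w) Finset.univ t := by
        intro t
        rw [pairTail_succ]
        refine tsum_congr fun w => ?_
        rw [idlaUpdate_eq_self (fun a _ => Finset.mem_univ a)]
      calc (∑ t ∈ Finset.range (N + 1), pairTail K ν A Finset.univ (t + 1)) + 1
          = (∑' w : List V, walkProb K ν w *
              ∑ t ∈ Finset.range (N + 1), pairTail K ν (idlaUpdate A w) Finset.univ t) + 1 := by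
            simp only [hrec]
            rw [← Summable.tsum_finsetSum (fun i _ => ENNReal.summable)]
            congr 1
            refine tsum_congr fun w => ?_
            rw [Finset.mul_sum]
        _ ≤ (∑' w : List V, (if y ∈ w then 0 else walkProb K ν w) * p⁻¹) + 1 := by
            refine add_le_add_left (ENNReal.tsum_le_tsum fun w => ?_) 1
            by_cases hyw : y ∈ w
            · rw [idlaUpdate_eq_insert hyA hS hyw, hins, if_pos hyw]
              simp [pairTail_self]
            · rw [idlaUpdate_eq_self (fun a ha => hS a (fun h => hyw (h ▸ ha)))]
              rw [if_neg hyw]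
              exact mul_le_mul_right (ih A Finset.univ (Finset.subset_univ A) ⟨y, hBA⟩) _
        _ = (∑' w : List V, (if y ∈ w then 0 else walkProb K ν w)) * p⁻¹ + 1 :=
            by rw [ENNReal.tsum_mul_right]
        _ ≤ (1 - p) * p⁻¹ + 1 :=
            add_le_add_left (mul_le_mul_left (miss_tsum_le K ν hsub hν y) _) 1
        _ = (1 - p) * p⁻¹ + p * p⁻¹ := by
            rw [ENNReal.mul_inv_cancel hp0 (lt_of_le_of_lt hp1 ENNReal.one_lt_top).ne]
        _ = p⁻¹ := by
            rw [← add_mul, tsub_add_cancel_of_le hp1, one_mul]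
    · have h0 : pairTail K ν A B 0 = 0 := by
        rw [pairTail_zero, if_neg (by tauto)]
      rw [h0, add_zero]
      calc ∑ t ∈ Finset.range (N + 1), pairTail K ν A B (t + 1)
          = ∑' w : List V, walkProb K ν w *
              ∑ t ∈ Finset.range (N + 1), pairTail K ν (idlaUpdate A w) (idlaUpdate B w) t := by
            simp only [pairTail_succ]
            rw [← Summable.tsum_finsetSum (fun i _ => ENNReal.summable)]
            refine tsum_congr fun w => ?_
            rw [Finset.mul_sum]
        _ ≤ ∑' w : List V, walkProb K ν w * p⁻¹ := by
            refine ENNReal.tsum_le_tsum fun w => ?_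
            obtain ⟨h1, y', h2⟩ := idlaUpdate_couple w y hAB hBA
            exact mul_le_mul_right (ih _ _ h1 ⟨y', h2⟩) _
        _ = (∑' w : List V, walkProb K ν w) * p⁻¹ := ENNReal.tsum_mul_right
        _ ≤ 1 * p⁻¹ :=
            mul_le_mul_left (walkProb_tsum_le_one K ν hsub hν) _
        _ = p⁻¹ := one_mul _

end Aux

end ARW

namespace ARW

/-- **Lemma (Control on increments).**  With `h(A) := E[T^A]` the expected filling
time of IDLA started from `A`, for any `x ∈ V` and `A ⊆ V`,
`0 ≤ h(A) − h(A ∪ {x}) ≤ 1 / min_z p(z)`. -/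
theorem idla_increment_control
    {V : Type} [Fintype V] [DecidableEq V] [Nonempty V]
    (K : V → V → ℝ≥0∞) (hsub : SubStochastic K) (hnd : NonDegenerate K)
    (ν : V → ℝ≥0∞) (hν : IsProbVec ν) (hadm : Admissible K ν)
    (x : V) (A : Finset V) :
    idlaMean K ν (insert x A) ≤ idlaMean K ν A
    ∧ idlaMean K ν A - idlaMean K ν (insert x A) ≤ (⨅ z, hitProb K ν z)⁻¹ := by
  classical
  set B := insert x A with hB
  set p := ⨅ z, hitProb K ν z with hp
  obtain ⟨z0, hz0⟩ := Finite.exists_min (hitProb K ν)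
  have hpz : p = hitProb K ν z0 := le_antisymm (iInf_le _ _) (le_iInf hz0)
  have hp0 : p ≠ 0 := by rw [hpz]; exact (hadm z0).ne'
  have hp1 : p ≤ 1 := by rw [hpz]; exact hitProb_le K ν hsub hν z0
  have key : idlaMean K ν A = idlaMean K ν B + ∑' t : ℕ, pairTail K ν A B t := by
    rw [idlaMean, idlaMean, ← ENNReal.tsum_add]
    exact tsum_congr fun t => idlaTail_split K ν x (Finset.subset_insert x A) (le_rfl) t
  have hDle : ∑' t : ℕ, pairTail K ν A B t ≤ p⁻¹ := by
    rw [ENNReal.tsum_eq_iSup_sum]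
    refine iSup_le fun s => ?_
    refine le_trans (Finset.sum_le_sum_of_subset (fun t ht => Finset.mem_range.mpr
      (Nat.lt_succ_of_le (Finset.le_sup (f := id) ht)))) ?_
    exact pairTail_sum_le K ν hsub hν hp0 hp1 _ A B (Finset.subset_insert x A) ⟨x, le_rfl⟩
  constructor
  · rw [key]
    exact le_add_right le_rfl
  · rw [key, tsub_le_iff_right]
    calc idlaMean K ν B + ∑' t : ℕ, pairTail K ν A B t
        ≤ idlaMean K ν B + p⁻¹ := add_le_add_right hDle _
      _ = p⁻¹ + idlaMean K ν B := add_comm _ _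


end ARW
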